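/- arXiv:2306.02338 — 2 statements merged into one kernel-verified Lean document; each statement's English description precedes it below -/
import Mathlib

section
/- Let G = (V, E) be a finite simple undirected graph with n = |V|, ℓ : V → C a coloring, α a real number with 1/|C| ≤ α ≤ 1, and γ ∈ [0,1]. Assume α(V) ≤ α, and let OPT = max{ d(T) : ∅ ≠ T ⊆ V, α(T) ≤ α }. If S ⊆ V satisfies |S| ≥ ⌈1/α⌉ and d(S) ≥ γ · max{ d(T) : T ⊆ V, |T| ≥ ⌈1/α⌉ }, then there exists T with S ⊆ T ⊆ V such that α(T) ≤ α and d(T) ≥ (γ/|C|) · OPT. (Indeed, α ≥ 1/|C| implies ⌈1/α⌉ ≤ |C|.) -/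
open Finset

/-- The set of edges of `G` with both endpoints in `S`. -/
def edgesIn {V : Type*} [Fintype V] [DecidableEq V] (G : SimpleGraph V) [DecidableRel G.Adj]
    (S : Finset V) : Finset (Sym2 V) :=
  G.edgeFinset.filter (fun e => ∀ v ∈ e, v ∈ S)

/-- The (degree) density `d(S) = |E(S)|/|S|`. -/
noncomputable def density {V : Type*} [Fintype V] [DecidableEq V] (G : SimpleGraph V)
    [DecidableRel G.Adj] (S : Finset V) : ℝ :=
  ((edgesIn G S).card : ℝ) / S.card

/-- `S_c`, the set of nodes of `S` with color `c`. -/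
def colorClass {V C : Type*} [DecidableEq V] [DecidableEq C] (ℓ : V → C) (S : Finset V) (c : C) :
    Finset V := S.filter (fun v => ℓ v = c)

/-- `c_max(S)`, the maximum number of nodes of `S` sharing a single color. -/
def cmax {V C : Type*} [DecidableEq V] [Fintype C] [DecidableEq C] (ℓ : V → C) (S : Finset V) : ℕ :=
  Finset.univ.sup (fun c => (colorClass ℓ S c).card)

/-- `α(S) = c_max(S)/|S|`, the maximum fraction of monochromatic nodes in `S`. -/
noncomputable def alphaOf {V C : Type*} [DecidableEq V] [Fintype C] [DecidableEq C]
    (ℓ : V → C) (S : Finset V) : ℝ := (cmax ℓ S : ℝ) / S.card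

section Aux

variable {V C : Type*} [Fintype V] [DecidableEq V] [Fintype C] [DecidableEq C]

lemma aux_colorClass_card_le_cmax (ℓ : V → C) (S : Finset V) (c : C) :
    (colorClass ℓ S c).card ≤ cmax ℓ S :=
  Finset.le_sup (f := fun c => (colorClass ℓ S c).card) (mem_univ c)

lemma aux_cmax_le_card (ℓ : V → C) (S : Finset V) : cmax ℓ S ≤ S.card :=
  Finset.sup_le fun _ _ => card_le_card (filter_subset _ _)

lemma aux_cmax_mono (ℓ : V → C) {S T : Finset V} (h : S ⊆ T) : cmax ℓ S ≤ cmax ℓ T :=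
  Finset.sup_le fun c _ =>
    le_trans (card_le_card (filter_subset_filter _ h)) (aux_colorClass_card_le_cmax ℓ T c)

lemma aux_one_le_cmax (ℓ : V → C) {S : Finset V} (h : S.Nonempty) : 1 ≤ cmax ℓ S := by
  obtain ⟨v, hv⟩ := h
  calc 1 ≤ (colorClass ℓ S (ℓ v)).card :=
        card_pos.mpr ⟨v, by simp [colorClass, hv]⟩
    _ ≤ cmax ℓ S := aux_colorClass_card_le_cmax ℓ S (ℓ v)

lemma aux_edgesIn_mono (G : SimpleGraph V) [DecidableRel G.Adj] {S T : Finset V} (h : S ⊆ T) :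
    edgesIn G S ⊆ edgesIn G T := by
  intro e he
  rw [edgesIn, mem_filter] at he ⊢
  exact ⟨he.1, fun v hv => h (he.2 v hv)⟩

end Aux


/-- `(γ/|C|)`-approximation: a `γ`-approximate solution to DalkS with `k = ⌈1/α⌉`
extends to a diverse set `T` with `d(T) ≥ (γ/|C|) · OPT`; indeed `α ≥ 1/|C|` implies
`⌈1/α⌉ ≤ |C|`. -/
theorem stmt7 {V C : Type*} [Fintype V] [DecidableEq V] [Fintype C] [DecidableEq C]
    (G : SimpleGraph V) [DecidableRel G.Adj] (ℓ : V → C) (α : ℝ)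
    (hα₁ : 1 / (Fintype.card C : ℝ) ≤ α) (hα₂ : α ≤ 1)
    (γ : ℝ) (hγ0 : 0 ≤ γ) (hγ1 : γ ≤ 1)
    (hV : alphaOf ℓ (Finset.univ : Finset V) ≤ α)
    (S : Finset V) (hScard : ⌈1 / α⌉₊ ≤ S.card)
    (hSdens : γ * sSup {x : ℝ | ∃ T : Finset V, ⌈1 / α⌉₊ ≤ T.card ∧ density G T = x}
      ≤ density G S) :
    (∃ T : Finset V, S ⊆ T ∧ alphaOf ℓ T ≤ α ∧
      (γ / Fintype.card C) *
        sSup {x : ℝ | ∃ T' : Finset V, T'.Nonempty ∧ alphaOf ℓ T' ≤ α ∧ density G T' = x}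
      ≤ density G T) ∧ ⌈1 / α⌉₊ ≤ Fintype.card C := by
  classical
  by_cases hVne : (Finset.univ : Finset V).Nonempty
  · -- V nonempty
    have hCne : Nonempty C := ⟨ℓ hVne.choose⟩
    have hCpos : 0 < Fintype.card C := Fintype.card_pos
    have hCposR : (0:ℝ) < (Fintype.card C : ℝ) := by exact_mod_cast hCpos
    have hαpos : 0 < α := lt_of_lt_of_le (by positivity) hα₁
    -- second conjunct
    have hkC : ⌈1 / α⌉₊ ≤ Fintype.card C := by
      rw [Nat.ceil_le]
      rw [div_le_iff₀ hαpos]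
      rw [one_div, inv_le_iff_one_le_mul₀ hCposR] at hα₁
      linarith [hα₁]
    -- S nonempty
    have hSne : S.Nonempty := by
      rw [← card_pos]
      calc 0 < ⌈1 / α⌉₊ := Nat.one_le_ceil_iff.mpr (by positivity)
        _ ≤ S.card := hScard
    set m := cmax ℓ S with hm
    have hm1 : 1 ≤ m := aux_one_le_cmax ℓ hSne
    set M := cmax ℓ (Finset.univ : Finset V) with hM
    have hmM : m ≤ M := aux_cmax_mono ℓ (subset_univ S)
    have hMpos : 0 < M := lt_of_lt_of_le hm1 hmM
    have hn : 0 < (Finset.univ : Finset V).card := card_pos.mpr hVne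
    -- M ≤ α * n
    have hMn : (M : ℝ) ≤ α * (Finset.univ : Finset V).card := by
      have := hV
      rw [alphaOf, div_le_iff₀ (by exact_mod_cast hn)] at this
      exact this
    -- build T
    have hchoose : ∀ c : C, ∃ B : Finset V,
        colorClass ℓ S c ⊆ B ∧ B ⊆ colorClass ℓ (Finset.univ) c ∧
          B.card = min (colorClass ℓ (Finset.univ) c).card m := by
      intro c
      apply Finset.exists_subsuperset_card_eq
      · exact filter_subset_filter _ (subset_univ S)
      · exact le_min (card_le_card (filter_subset_filter _ (subset_univ S)))
          (aux_colorClass_card_le_cmax ℓ S c)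
      · exact min_le_left _ _
    choose B hB1 hB2 hB3 using hchoose
    set T : Finset V := Finset.univ.biUnion B with hT
    have hST : S ⊆ T := by
      intro v hv
      rw [hT, mem_biUnion]
      exact ⟨ℓ v, mem_univ _, hB1 (ℓ v) (by simp [colorClass, hv])⟩
    have hccT : ∀ c, colorClass ℓ T c = B c := by
      intro c
      apply Finset.Subset.antisymm
      · intro v hv
        rw [colorClass, mem_filter] at hv
        obtain ⟨hvT, hvc⟩ := hv
        rw [hT, mem_biUnion] at hvT
        obtain ⟨c', _, hvB⟩ := hvT
        have hcc : ℓ v = c' := (mem_filter.mp (hB2 c' hvB)).2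
        rw [show c' = c from hcc.symm.trans hvc] at hvB
        exact hvB
      · intro v hv
        rw [colorClass, mem_filter]
        refine ⟨?_, (mem_filter.mp (hB2 c hv)).2⟩
        rw [hT, mem_biUnion]; exact ⟨c, mem_univ _, hv⟩
    have hTcard : T.card = ∑ c : C, min (colorClass ℓ (Finset.univ) c).card m := by
      rw [hT, card_biUnion]
      · exact Finset.sum_congr rfl fun c _ => hB3 c
      · intro c₁ _ c₂ _ hne
        apply Finset.disjoint_left.mpr
        intro v hv1 hv2
        exact hne ((((mem_filter.mp (hB2 c₁ hv1)).2).symm).trans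
          ((mem_filter.mp (hB2 c₂ hv2)).2))
    -- m * n ≤ T.card * M  (nat)
    have hkey : m * (Finset.univ : Finset V).card ≤ T.card * M := by
      rw [hTcard, Finset.sum_mul]
      have hfib : (Finset.univ : Finset V).card
          = ∑ c : C, (colorClass ℓ (Finset.univ) c).card := by
        exact Finset.card_eq_sum_card_fiberwise (fun v _ => mem_univ (ℓ v))
      rw [hfib, Finset.mul_sum]
      apply Finset.sum_le_sum
      intro c _
      rcases le_total (colorClass ℓ (Finset.univ) c).card m with h | h
      · rw [min_eq_left h, Nat.mul_comm m]
        exact Nat.mul_le_mul_left _ hmM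
      · rw [min_eq_right h]
        exact Nat.mul_le_mul_left m (aux_colorClass_card_le_cmax ℓ _ c)
    have hkeyR : (m : ℝ) * (Finset.univ : Finset V).card ≤ (T.card : ℝ) * M := by
      exact_mod_cast hkey
    -- m ≤ α * T.card
    have hmT : (m : ℝ) ≤ α * T.card := by
      have hnR : (0:ℝ) < ((Finset.univ : Finset V).card : ℝ) := by exact_mod_cast hn
      have h1 : (T.card : ℝ) * M ≤ (T.card : ℝ) * (α * (Finset.univ : Finset V).card) := by
        apply mul_le_mul_of_nonneg_left hMn (by positivity)
      nlinarith [hkeyR, h1]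
    have hTpos : 0 < T.card := card_pos.mpr (hSne.mono hST)
    have hTposR : (0:ℝ) < (T.card : ℝ) := by exact_mod_cast hTpos
    -- alphaOf T ≤ α
    have hαT : alphaOf ℓ T ≤ α := by
      rw [alphaOf, div_le_iff₀ hTposR]
      have hcmaxT : cmax ℓ T ≤ m := by
        apply Finset.sup_le
        intro c _
        rw [hccT c, hB3 c]
        exact min_le_right _ _
      calc (cmax ℓ T : ℝ) ≤ (m : ℝ) := by exact_mod_cast hcmaxT
        _ ≤ α * T.card := hmT
    -- T.card ≤ card C * S.card
    have hTle : T.card ≤ Fintype.card C * S.card := by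
      rw [hTcard]
      calc ∑ c : C, min (colorClass ℓ (Finset.univ) c).card m
          ≤ ∑ _c : C, m := Finset.sum_le_sum fun c _ => min_le_right _ _
        _ = Fintype.card C * m := by rw [Finset.sum_const, smul_eq_mul, Finset.card_univ]
        _ ≤ Fintype.card C * S.card := Nat.mul_le_mul_left _ (aux_cmax_le_card ℓ S)
    -- sups
    set D : Set ℝ := {x : ℝ | ∃ T : Finset V, ⌈1 / α⌉₊ ≤ T.card ∧ density G T = x} with hD
    set F : Set ℝ := {x : ℝ | ∃ T' : Finset V, T'.Nonempty ∧ alphaOf ℓ T' ≤ α ∧ density G T' = x}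
      with hF
    have hDbdd : BddAbove D := by
      apply BddAbove.mono (t := Set.range (density G))
      · rintro x ⟨T', _, hT'⟩; exact ⟨T', hT'⟩
      · exact (Set.finite_range _).bddAbove
    have hFD : F ⊆ D := by
      rintro x ⟨T', hT'ne, hT'α, hT'd⟩
      refine ⟨T', ?_, hT'd⟩
      rw [Nat.ceil_le]
      have hT'pos : (0:ℝ) < (T'.card : ℝ) := by exact_mod_cast card_pos.mpr hT'ne
      rw [alphaOf, div_le_iff₀ hT'pos] at hT'α
      have h1 : (1:ℝ) ≤ α * T'.card :=
        le_trans (by exact_mod_cast aux_one_le_cmax ℓ hT'ne) hT'α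
      rw [div_le_iff₀ hαpos]; linarith
    have hFne : F.Nonempty := ⟨density G Finset.univ, Finset.univ, hVne, hV, rfl⟩
    have hsup : sSup F ≤ sSup D := csSup_le_csSup hDbdd hFne hFD
    -- density chain
    have hES : edgesIn G S ⊆ edgesIn G T := aux_edgesIn_mono G hST
    refine ⟨⟨T, hST, hαT, ?_⟩, hkC⟩
    have hTleR : (T.card : ℝ) ≤ (Fintype.card C : ℝ) * S.card := by exact_mod_cast hTle
    have hdchain : density G S / Fintype.card C ≤ density G T := by
      rw [density, density, div_div]
      apply div_le_div₀ (by positivity) (by exact_mod_cast card_le_card hES) hTposR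
      calc (T.card:ℝ) ≤ Fintype.card C * S.card := hTleR
        _ = (S.card : ℝ) * Fintype.card C := by ring
    calc (γ / Fintype.card C) * sSup F
        ≤ (γ / Fintype.card C) * sSup D := by
          apply mul_le_mul_of_nonneg_left hsup (by positivity)
      _ = (γ * sSup D) / Fintype.card C := by ring
      _ ≤ density G S / Fintype.card C := by gcongr
      _ ≤ density G T := hdchain
  · -- V empty
    have hSempty : S = ∅ := eq_empty_of_forall_notMem fun v _ => hVne ⟨v, mem_univ v⟩
    have hα0 : 0 ≤ α := le_trans (by positivity) hα₁
    have hk0 : ⌈1 / α⌉₊ = 0 := Nat.le_zero.mp (by simpa [hSempty] using hScard)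
    refine ⟨⟨∅, by simp [hSempty], ?_, ?_⟩, hk0 ▸ Nat.zero_le _⟩
    · simp [alphaOf, cmax, colorClass, hα0]
    · have hFempty : {x : ℝ | ∃ T' : Finset V, T'.Nonempty ∧ alphaOf ℓ T' ≤ α ∧ density G T' = x}
          = ∅ := by
        ext x
        simp only [Set.mem_setOf_eq, Set.mem_empty_iff_false, iff_false]
        rintro ⟨T', ⟨v, _⟩, _, _⟩
        exact hVne ⟨v, mem_univ v⟩
      rw [hFempty, Real.sSup_empty, mul_zero]
      simp [density]
end

section
/- Let G = (V, E) be a finite simple undirected graph, ℓ : V → C a coloring, and k⃗ = (k_c)_{c∈C} ∈ ℤ_{≥0}^{|C|}. Suppose S* ⊆ V is an optimal solution for Dal k⃗ S satisfying |S*_c| > k_c for every c ∈ C with k_c ≥ 1 (optimal means S* is feasible and d(S*) ≥ d(T) for every feasible T). If S' satisfies S* ⊆ S' ⊆ V and there is a vertex v* ∈ S* of minimum degree in the induced subgraph G[S'] (i.e., deg_{S'}(v*) ≤ deg_{S'}(u) for every u ∈ S'), then S' is feasible for Dal k⃗ S and d(S') ≥ d(S*)/2. -/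
open Finset

/-- `deg_S(v)`, the degree of `v` in the induced subgraph `G[S]`. -/
def degIn {V : Type*} [DecidableEq V] (G : SimpleGraph V) [DecidableRel G.Adj]
    (S : Finset V) (v : V) : ℕ :=
  (S.filter (fun u => G.Adj v u)).card

section Helpers

variable {V : Type*} [Fintype V] [DecidableEq V]

def inducedOn (G : SimpleGraph V) [DecidableRel G.Adj] (S : Finset V) : SimpleGraph V where
  Adj u v := G.Adj u v ∧ u ∈ S ∧ v ∈ S
  symm := ⟨by rintro u v ⟨h, hu, hv⟩; exact ⟨h.symm, hv, hu⟩⟩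
  loopless := ⟨fun v h => G.loopless.irrefl v h.1⟩

instance (G : SimpleGraph V) [DecidableRel G.Adj] (S : Finset V) :
    DecidableRel (inducedOn G S).Adj := fun u v => inferInstanceAs (Decidable (G.Adj u v ∧ u ∈ S ∧ v ∈ S))

lemma inducedOn_adj (G : SimpleGraph V) [DecidableRel G.Adj] (S : Finset V) (u v : V) :
    (inducedOn G S).Adj u v ↔ G.Adj u v ∧ u ∈ S ∧ v ∈ S := Iff.rfl

variable (G : SimpleGraph V) [DecidableRel G.Adj]

lemma handshake (S : Finset V) : ∑ u ∈ S, degIn G S u = 2 * (edgesIn G S).card := by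
  have hE : edgesIn G S = (inducedOn G S).edgeFinset := by
    ext e
    induction e using Sym2.ind with
    | _ a b =>
      simp only [edgesIn, mem_filter, SimpleGraph.mem_edgeFinset, SimpleGraph.mem_edgeSet,
        Sym2.mem_iff, inducedOn_adj]
      constructor
      · rintro ⟨h, h2⟩
        exact ⟨h, h2 a (Or.inl rfl), h2 b (Or.inr rfl)⟩
      · rintro ⟨h, ha, hb⟩
        refine ⟨h, ?_⟩
        rintro v (rfl | rfl) <;> assumption
  have hdeg : ∀ u ∈ S, degIn G S u = (inducedOn G S).degree u := by
    intro u hu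
    have h : (inducedOn G S).neighborFinset u = S.filter (fun w => G.Adj u w) := by
      ext w
      simp [SimpleGraph.mem_neighborFinset, inducedOn_adj, hu, and_comm]
    rw [degIn, SimpleGraph.degree, h]
  have hzero : ∀ u ∉ S, (inducedOn G S).degree u = 0 := by
    intro u hu
    rw [SimpleGraph.degree, Finset.card_eq_zero]
    ext w
    simp only [SimpleGraph.mem_neighborFinset, inducedOn_adj, Finset.notMem_empty, iff_false]
    rintro ⟨-, h, -⟩; exact hu h
  have step1 : ∑ u ∈ S, degIn G S u = ∑ u ∈ S, (inducedOn G S).degree u := by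
    exact Finset.sum_congr rfl hdeg
  have step2 : ∑ u ∈ S, (inducedOn G S).degree u
      = ∑ u ∈ (Finset.univ : Finset V), (inducedOn G S).degree u := by
    apply Finset.sum_subset (Finset.subset_univ S)
    intro u _ hu; exact hzero u hu
  rw [step1, step2, hE]
  exact (inducedOn G S).sum_degrees_eq_twice_card_edges

lemma edges_erase {S : Finset V} {v : V} (hv : v ∈ S) :
    (edgesIn G (S.erase v)).card + degIn G S v = (edgesIn G S).card := by
  classical
  have h1 : edgesIn G (S.erase v) = (edgesIn G S).filter (fun e => v ∉ e) := by
    ext e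
    induction e using Sym2.ind with
    | _ a b =>
      simp only [edgesIn, mem_filter, Sym2.mem_iff, Finset.mem_erase,
        SimpleGraph.mem_edgeFinset, SimpleGraph.mem_edgeSet]
      constructor
      · rintro ⟨h, h2⟩
        have ha := h2 a (Or.inl rfl)
        have hb := h2 b (Or.inr rfl)
        refine ⟨⟨h, ?_⟩, ?_⟩
        · rintro w (rfl | rfl); exacts [ha.2, hb.2]
        · rintro (rfl | rfl); exacts [ha.1 rfl, hb.1 rfl]
      · rintro ⟨⟨h, h2⟩, h3⟩
        refine ⟨h, ?_⟩
        rintro w (rfl | rfl)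
        · exact ⟨fun hwv => h3 (Or.inl hwv.symm), h2 w (Or.inl rfl)⟩
        · exact ⟨fun hwv => h3 (Or.inr hwv.symm), h2 w (Or.inr rfl)⟩
  have h2 : degIn G S v = ((edgesIn G S).filter (fun e => v ∈ e)).card := by
    apply Finset.card_bij (fun u _ => s(v, u))
    · intro u hu
      rw [Finset.mem_filter] at hu
      simp only [Finset.mem_filter, edgesIn, SimpleGraph.mem_edgeFinset,
        SimpleGraph.mem_edgeSet, Sym2.mem_iff]
      refine ⟨⟨hu.2, ?_⟩, by simp⟩
      rintro w (rfl | rfl); exacts [hv, hu.1]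
    · intro a _ b _ h
      exact Sym2.congr_right.1 h
    · intro e he
      induction e using Sym2.ind with
      | _ a b =>
        simp only [edgesIn, Finset.mem_filter, SimpleGraph.mem_edgeFinset,
          SimpleGraph.mem_edgeSet, Sym2.mem_iff] at he
        obtain ⟨⟨hadj, hmem⟩, hv'⟩ := he
        rcases hv' with rfl | rfl
        · exact ⟨b, Finset.mem_filter.2 ⟨hmem b (Or.inr rfl), hadj⟩, rfl⟩
        · exact ⟨a, Finset.mem_filter.2 ⟨hmem a (Or.inl rfl), hadj.symm⟩, Sym2.eq_swap⟩
  rw [h1, h2]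
  have := Finset.card_filter_add_card_filter_not
    (s := edgesIn G S) (p := fun e => v ∈ e)
  omega

end Helpers

/-- Greedy peeling guarantee: if `S*` is an optimal Dal`k⃗`S solution satisfying all (positive)
demands strictly, and `S' ⊇ S*` contains a vertex of `S*` of minimum induced degree in `G[S']`,
then `S'` is feasible and `d(S') ≥ d(S*)/2`. -/
theorem stmt13 {V C : Type*} [Fintype V] [DecidableEq V] [Fintype C] [DecidableEq C]
    (G : SimpleGraph V) [DecidableRel G.Adj] (ℓ : V → C) (k : C → ℕ)
    (Sstar : Finset V)
    (hfeas : ∀ c : C, k c ≤ (colorClass ℓ Sstar c).card)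
    (hstrict : ∀ c : C, 1 ≤ k c → k c < (colorClass ℓ Sstar c).card)
    (hopt : ∀ T : Finset V, (∀ c : C, k c ≤ (colorClass ℓ T c).card) →
      density G T ≤ density G Sstar)
    (S' : Finset V) (hsub : Sstar ⊆ S')
    (vstar : V) (hv : vstar ∈ Sstar)
    (hmin : ∀ u ∈ S', degIn G S' vstar ≤ degIn G S' u) :
    (∀ c : C, k c ≤ (colorClass ℓ S' c).card) ∧
      density G Sstar / 2 ≤ density G S' := by
  classical
  have hvS' : vstar ∈ S' := hsub hv
  constructor
  · intro c
    exact (hfeas c).trans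
      (Finset.card_le_card (Finset.filter_subset_filter _ hsub))
  · -- density bound
    by_cases hn1 : Sstar.card = 1
    · -- Sstar = {vstar}
      obtain ⟨a, ha⟩ := Finset.card_eq_one.1 hn1
      subst ha
      rw [Finset.mem_singleton] at hv
      subst hv
      have hm0 : edgesIn G {vstar} = ∅ := by
        rw [Finset.eq_empty_iff_forall_notMem]
        intro e he
        induction e using Sym2.ind with
        | _ a b =>
          simp only [edgesIn, Finset.mem_filter, SimpleGraph.mem_edgeFinset,
            SimpleGraph.mem_edgeSet, Sym2.mem_iff, Finset.mem_singleton] at he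
          obtain ⟨hadj, h⟩ := he
          have ha := h a (Or.inl rfl)
          have hb := h b (Or.inr rfl)
          subst ha; subst hb
          exact G.loopless.irrefl _ hadj
      have h0 : density G {vstar} = 0 := by simp [density, hm0]
      rw [h0]
      have hnn : (0:ℝ) ≤ density G S' := by unfold density; positivity
      linarith
    · -- |Sstar| ≥ 2
      have hn1pos : 0 < Sstar.card := Finset.card_pos.2 ⟨vstar, hv⟩
      have hn1' : 2 ≤ Sstar.card := by omega
      -- feasibility of the erased set
      have hT : ∀ c : C, k c ≤ (colorClass ℓ (Sstar.erase vstar) c).card := by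
        intro c
        by_cases hk : k c = 0
        · simp [hk]
        · have h1 := hstrict c (Nat.one_le_iff_ne_zero.2 hk)
          have h2 : colorClass ℓ (Sstar.erase vstar) c = (colorClass ℓ Sstar c).erase vstar := by
            simp [colorClass, Finset.filter_erase]
          rw [h2]
          have := Finset.pred_card_le_card_erase (s := colorClass ℓ Sstar c) (a := vstar)
          omega
      have hoptT := hopt _ hT
      -- notation
      set m1 := (edgesIn G Sstar).card with hm1
      set n1 := Sstar.card with hn1d
      set dstar := degIn G Sstar vstar with hds
      have hee := edges_erase G hv
      have hce : (Sstar.erase vstar).card = n1 - 1 := Finset.card_erase_of_mem hv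
      -- cast optimality inequality
      have hoptT' : ((m1 - dstar : ℕ) : ℝ) / ((n1 - 1 : ℕ) : ℝ) ≤ (m1 : ℝ) / (n1 : ℝ) := by
        have : (edgesIn G (Sstar.erase vstar)).card = m1 - dstar := by omega
        rw [density, density, this, hce] at hoptT
        exact hoptT
      have hdm : dstar ≤ m1 := by omega
      have hkey : (m1 : ℝ) / (n1 : ℝ) ≤ (dstar : ℝ) := by
        have hc1 : ((m1 - dstar : ℕ) : ℝ) = (m1 : ℝ) - (dstar : ℝ) := by
          push_cast [hdm]; ring
        have hc2 : ((n1 - 1 : ℕ) : ℝ) = (n1 : ℝ) - 1 := by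
          have : 1 ≤ n1 := by omega
          push_cast [this]; ring
        rw [hc1, hc2] at hoptT'
        have hp1 : (0 : ℝ) < (n1 : ℝ) - 1 := by
          have : (2 : ℝ) ≤ (n1 : ℝ) := by exact_mod_cast hn1'
          linarith
        have hp2 : (0 : ℝ) < (n1 : ℝ) := by positivity
        rw [div_le_div_iff₀ hp1 hp2] at hoptT'
        rw [div_le_iff₀ hp2]
        nlinarith
      -- min degree in S'
      have hmono : dstar ≤ degIn G S' vstar := by
        apply Finset.card_le_card
        exact Finset.filter_subset_filter _ hsub
      set dmin := degIn G S' vstar with hdmin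
      -- handshake on S'
      have hhs := handshake G S'
      have hsumlb : S'.card * dmin ≤ ∑ u ∈ S', degIn G S' u := by
        calc S'.card * dmin = S'.card • dmin := by rw [smul_eq_mul]
          _ ≤ ∑ u ∈ S', degIn G S' u := Finset.card_nsmul_le_sum _ _ _ hmin
      have hnat : S'.card * dmin ≤ 2 * (edgesIn G S').card := by omega
      have hn2 : (0 : ℝ) < (S'.card : ℝ) := by
        exact_mod_cast Finset.card_pos.2 ⟨vstar, hvS'⟩
      have hR : (S'.card : ℝ) * (dmin : ℝ) ≤ 2 * ((edgesIn G S').card : ℝ) := by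
        exact_mod_cast hnat
      have hfin : (dmin : ℝ) / 2 ≤ density G S' := by
        rw [density, div_le_div_iff₀ (by norm_num : (0:ℝ) < 2) hn2]
        linarith
      have hds' : (dstar : ℝ) ≤ (dmin : ℝ) := by exact_mod_cast hmono
      rw [density]
      linarith
end
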